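/- Weighted fractional Poincaré inequality on the periodic cube: Let d ≥ 1, λ ∈ (0,1), Q = (0,2π)^d, and c_ρ > 0. Then for every measurable ρ : Q → ℝ with ρ ≥ c_ρ a.e. and every f ∈ L²(Q;ℝ^d), ∫_Q |f(x) − f̄|² dx ≤ ((2π√d)^{d+2λ} / (2(2π)^d c_ρ²)) ∫_Q ∫_Q ρ(x)ρ(y) |f(x) − f(y)|² κ_λ(x−y) dx dy, where f̄ = (2π)^{−d} ∫_Q f(x) dx and κ_λ(z) = Σ_{n∈ℤ^d} |z − 2πn|^{−(d+2λ)}. -/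

import Mathlib

open MeasureTheory Real
open scoped ENNReal NNReal

noncomputable section

/-- The lattice point `2πn ∈ ℝ^d`, as an element of Euclidean space. -/
def latt (d : ℕ) (n : Fin d → ℤ) : EuclideanSpace ℝ (Fin d) :=
  WithLp.toLp 2 (fun i => 2 * π * (n i : ℝ))

/-- The singular periodic kernel `κ_λ(z) = Σ_{n∈ℤ^d} |z−2πn|^{−(d+2λ)}`, valued in `[0,∞]`. -/
def kappaE (d : ℕ) (lam : ℝ) (z : EuclideanSpace ℝ (Fin d)) : ENNReal :=
  ∑' n : Fin d → ℤ, ENNReal.ofReal (‖z - latt d n‖ ^ (-((d : ℝ) + 2 * lam)))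

/-- The open cube `Q = (0,2π)^d`. -/
def cubeO (d : ℕ) : Set (EuclideanSpace ℝ (Fin d)) :=
  {x | ∀ i, x i ∈ Set.Ioo (0 : ℝ) (2 * π)}

lemma latt_zero (d : ℕ) : latt d 0 = 0 := by
  ext i
  simp [latt]

lemma cubeO_eq (d : ℕ) :
    cubeO d = (MeasurableEquiv.toLp 2 (Fin d → ℝ)).symm ⁻¹'
      (Set.univ.pi fun _ : Fin d => Set.Ioo (0 : ℝ) (2 * π)) := by
  ext x
  simp [cubeO, Set.mem_pi]

lemma measurableSet_cubeO (d : ℕ) : MeasurableSet (cubeO d) := by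
  rw [cubeO_eq]
  exact (MeasurableEquiv.toLp 2 (Fin d → ℝ)).symm.measurable
    (MeasurableSet.univ_pi fun _ => measurableSet_Ioo)

lemma volume_cubeO (d : ℕ) : volume (cubeO d) = ENNReal.ofReal ((2 * π) ^ d) := by
  rw [cubeO_eq,
    (EuclideanSpace.volume_preserving_symm_measurableEquiv_toLp (Fin d)).measure_preimage_equiv,
    volume_pi_pi]
  simp [Real.volume_Ioo, ← ENNReal.ofReal_pow Real.two_pi_pos.le]
  rw [ENNReal.ofReal_pow Real.two_pi_pos.le, ENNReal.ofReal_mul (by norm_num)]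
  simp

/-- One term of the kernel sum (at `n = 0`) bounds it below. -/
lemma kappa_ge (d : ℕ) (lam : ℝ) (z : EuclideanSpace ℝ (Fin d)) :
    ENNReal.ofReal (‖z‖ ^ (-((d : ℝ) + 2 * lam))) ≤ kappaE d lam z := by
  have h := ENNReal.le_tsum (f := fun n : Fin d → ℤ =>
    ENNReal.ofReal (‖z - latt d n‖ ^ (-((d : ℝ) + 2 * lam)))) 0
  simpa [kappaE, latt_zero] using h

/-- Diameter bound on the cube. -/
lemma dist_le_cube (d : ℕ) {x y : EuclideanSpace ℝ (Fin d)}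
    (hx : x ∈ cubeO d) (hy : y ∈ cubeO d) : ‖x - y‖ ≤ 2 * π * Real.sqrt d := by
  rw [EuclideanSpace.norm_eq]
  have hle : ∀ i, ‖(x - y) i‖ ^ 2 ≤ (2 * π) ^ 2 := by
    intro i
    have hxi := hx i
    have hyi := hy i
    have h1 : |x i - y i| ≤ 2 * π := by
      rw [abs_le]
      constructor <;> [linarith [hxi.1, hyi.2]; linarith [hxi.2, hyi.1]]
    have h2 : ‖(x - y) i‖ = |x i - y i| := by
      simp [PiLp.sub_apply, Real.norm_eq_abs]
    rw [h2]
    exact pow_le_pow_left₀ (abs_nonneg _) h1 2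
  calc Real.sqrt (∑ i, ‖(x - y) i‖ ^ 2)
      ≤ Real.sqrt (∑ _i : Fin d, (2 * π) ^ 2) :=
        Real.sqrt_le_sqrt (Finset.sum_le_sum fun i _ => hle i)
    _ = 2 * π * Real.sqrt d := by
        rw [Finset.sum_const, Finset.card_univ, Fintype.card_fin, nsmul_eq_mul,
          Real.sqrt_mul (by positivity), Real.sqrt_sq Real.two_pi_pos.le]
        ring

/-- Weighted fractional Poincaré inequality on the periodic cube. If
`ρ ≥ c_ρ > 0` a.e. on `Q = (0,2π)^d` and `f ∈ L²(Q;ℝ^d)`, then with `f̄ = (2π)^{−d}∫_Q f`,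
`∫_Q |f − f̄|² ≤ ((2π√d)^{d+2λ}/(2(2π)^d c_ρ²)) ∫_Q∫_Q ρ(x)ρ(y)|f(x)−f(y)|² κ_λ(x−y) dx dy`. -/
theorem weighted_fractional_poincare
    (d : ℕ) (hd : 1 ≤ d) (lam : ℝ) (hlam : lam ∈ Set.Ioo (0 : ℝ) 1)
    (crho : ℝ) (hcrho : 0 < crho)
    (ρ : EuclideanSpace ℝ (Fin d) → ℝ) (hρm : Measurable ρ)
    (hρ : ∀ᵐ x ∂(volume.restrict (cubeO d)), crho ≤ ρ x)
    (f : EuclideanSpace ℝ (Fin d) → EuclideanSpace ℝ (Fin d))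
    (hf : MemLp f 2 (volume.restrict (cubeO d))) :
    ∫⁻ x in cubeO d,
        (‖f x - ((2 * π) ^ d : ℝ)⁻¹ • (∫ y in cubeO d, f y)‖₊ : ENNReal) ^ 2
      ≤ ENNReal.ofReal
          ((2 * π * Real.sqrt d) ^ ((d : ℝ) + 2 * lam) / (2 * (2 * π) ^ d * crho ^ 2)) *
        ∫⁻ x in cubeO d, ∫⁻ y in cubeO d,
          ENNReal.ofReal (ρ x * ρ y * ‖f x - f y‖ ^ 2) * kappaE d lam (x - y) := by
  have hπ : (0 : ℝ) < 2 * π := Real.two_pi_pos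
  set μ := volume.restrict (cubeO d) with hμdef
  set B : ℝ := (2 * π) ^ d with hBdef
  have hB : 0 < B := pow_pos hπ d
  have hQvol : volume (cubeO d) = ENNReal.ofReal B := volume_cubeO d
  haveI : IsFiniteMeasure μ := by
    constructor
    rw [hμdef, Measure.restrict_apply_univ, hQvol]
    exact ENNReal.ofReal_lt_top
  have hμuniv : μ.real Set.univ = B := by
    rw [measureReal_def, hμdef, Measure.restrict_apply_univ, hQvol, ENNReal.toReal_ofReal hB.le]
  set fbar : EuclideanSpace ℝ (Fin d) := B⁻¹ • ∫ y in cubeO d, f y with hfbar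
  set g : EuclideanSpace ℝ (Fin d) → EuclideanSpace ℝ (Fin d) := fun x => f x - fbar with hgdef
  have hfg : ∀ x y, f x - f y = g x - g y := by
    intro x y; simp only [hgdef]; abel
  have hfInt : Integrable f μ := hf.integrable one_le_two
  have hg2 : MemLp g 2 μ := hf.sub (memLp_const fbar)
  have hgInt : Integrable g μ := hg2.integrable one_le_two
  have hgmean : ∫ x, g x ∂μ = 0 := by
    rw [hgdef]
    rw [integral_sub hfInt (integrable_const _), integral_const, hμuniv, hfbar,
      smul_smul, mul_inv_cancel₀ hB.ne', one_smul]
    have : ∫ y in cubeO d, f y = ∫ x, f x ∂μ := rfl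
    rw [this, sub_self]
  have normsq_int : ∀ h : EuclideanSpace ℝ (Fin d) → EuclideanSpace ℝ (Fin d),
      MemLp h 2 μ → Integrable (fun x => ‖h x‖ ^ 2) μ := by
    intro h hh
    have h2 := hh.integrable_norm_rpow two_ne_zero ENNReal.ofNat_ne_top
    have : (2 : ℝ≥0∞).toReal = ((2 : ℕ) : ℝ) := by norm_num
    simpa [this, Real.rpow_natCast] using h2
  have hgsq : Integrable (fun x => ‖g x‖ ^ 2) μ := normsq_int g hg2
  set A : ℝ := ∫ x, ‖g x‖ ^ 2 ∂μ with hA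
  have hA0 : 0 ≤ A := integral_nonneg fun x => sq_nonneg _
  -- variance identity, inner integral
  have key1 : ∀ z : EuclideanSpace ℝ (Fin d),
      ∫ y, ‖g z - g y‖ ^ 2 ∂μ = B * ‖g z‖ ^ 2 + A := by
    intro z
    have h2 : Integrable (fun y => 2 * (inner ℝ (g z) (g y) : ℝ)) μ :=
      (hgInt.const_inner (g z)).const_mul 2
    have hexp : (fun y => ‖g z - g y‖ ^ 2)
        = fun y => ‖g z‖ ^ 2 - 2 * (inner ℝ (g z) (g y) : ℝ) + ‖g y‖ ^ 2 := by
      funext y; exact norm_sub_sq_real _ _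
    have hsub : Integrable (fun y => ‖g z‖ ^ 2 - 2 * (inner ℝ (g z) (g y) : ℝ)) μ :=
      (integrable_const _).sub h2
    rw [hexp, integral_add hsub hgsq,
      integral_sub (integrable_const _) h2, integral_const, hμuniv,
      integral_const_mul, integral_inner hgInt, hgmean, inner_zero_right]
    simp only [smul_eq_mul, mul_zero]
    ring
  -- the double lintegral of ‖f x - f y‖²
  have key2 : (∫⁻ x in cubeO d, ∫⁻ y in cubeO d, ENNReal.ofReal (‖f x - f y‖ ^ 2))
      = ENNReal.ofReal (2 * B * A) := by
    have inner_eq : ∀ z : EuclideanSpace ℝ (Fin d),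
        (∫⁻ y, ENNReal.ofReal (‖f z - f y‖ ^ 2) ∂μ)
          = ENNReal.ofReal (B * ‖g z‖ ^ 2 + A) := by
      intro z
      have hint : Integrable (fun y => ‖g z - g y‖ ^ 2) μ := by
        have : MemLp (fun y => g z - g y) 2 μ := (memLp_const (g z)).sub hg2
        exact normsq_int _ this
      rw [← key1 z,
        ofReal_integral_eq_lintegral_ofReal hint (ae_of_all _ fun y => sq_nonneg _)]
      refine lintegral_congr fun y => ?_
      rw [hfg z y]
    calc (∫⁻ x in cubeO d, ∫⁻ y in cubeO d, ENNReal.ofReal (‖f x - f y‖ ^ 2))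
        = ∫⁻ x, ENNReal.ofReal (B * ‖g x‖ ^ 2 + A) ∂μ :=
          lintegral_congr fun x => inner_eq x
      _ = ENNReal.ofReal (∫ x, (B * ‖g x‖ ^ 2 + A) ∂μ) := by
          have hadd : Integrable (fun x => B * ‖g x‖ ^ 2 + A) μ :=
            (hgsq.const_mul B).add (integrable_const A)
          rw [ofReal_integral_eq_lintegral_ofReal hadd
            (ae_of_all _ fun x => by positivity)]
      _ = ENNReal.ofReal (2 * B * A) := by
          rw [integral_add (hgsq.const_mul B) (integrable_const A),
            integral_const_mul, integral_const, hμuniv, ← hA, smul_eq_mul]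
          congr 1
          ring
  -- LHS equals ofReal A
  have hLHS : (∫⁻ x in cubeO d, (‖f x - fbar‖₊ : ℝ≥0∞) ^ 2) = ENNReal.ofReal A := by
    rw [hA, ofReal_integral_eq_lintegral_ofReal hgsq (ae_of_all _ fun x => sq_nonneg _)]
    refine lintegral_congr fun x => ?_
    rw [← enorm_eq_nnnorm, ← ofReal_norm_eq_enorm, ← ENNReal.ofReal_pow (norm_nonneg _)]
  -- kernel and density lower bounds
  set s : ℝ := (d : ℝ) + 2 * lam with hsdef
  have hs : 0 < s := by
    have : (1 : ℝ) ≤ (d : ℝ) := by exact_mod_cast hd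
    have := hlam.1
    rw [hsdef]; linarith
  set D : ℝ := 2 * π * Real.sqrt d with hDdef
  have hD : 0 < D := by
    have h1 : (0 : ℝ) < Real.sqrt d := Real.sqrt_pos.mpr (by exact_mod_cast hd)
    positivity
  set C : ℝ := D ^ s with hCdef
  have hC : 0 < C := Real.rpow_pos_of_pos hD s
  have hpt : ∀ x y : EuclideanSpace ℝ (Fin d),
      crho ≤ ρ x ∧ x ∈ cubeO d → crho ≤ ρ y ∧ y ∈ cubeO d →
      ENNReal.ofReal (crho ^ 2 * C⁻¹) * ENNReal.ofReal (‖f x - f y‖ ^ 2)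
        ≤ ENNReal.ofReal (ρ x * ρ y * ‖f x - f y‖ ^ 2) * kappaE d lam (x - y) := by
    rintro x y ⟨hρx, hxQ⟩ ⟨hρy, hyQ⟩
    rcases eq_or_ne x y with rfl | hne
    · simp
    · have hker : ENNReal.ofReal C⁻¹ ≤ kappaE d lam (x - y) := by
        have h0 : 0 < ‖x - y‖ := by rwa [norm_pos_iff, sub_ne_zero]
        have h1 : D ^ (-s) ≤ ‖x - y‖ ^ (-s) :=
          Real.rpow_le_rpow_of_nonpos h0 (dist_le_cube d hxQ hyQ) (neg_nonpos.mpr hs.le)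
        calc ENNReal.ofReal C⁻¹ = ENNReal.ofReal (D ^ (-s)) := by
              rw [hCdef, ← Real.rpow_neg hD.le]
          _ ≤ ENNReal.ofReal (‖x - y‖ ^ (-s)) := ENNReal.ofReal_le_ofReal h1
          _ ≤ kappaE d lam (x - y) := by
              have := kappa_ge d lam (x - y)
              rwa [hsdef]
      have h1 : ENNReal.ofReal (crho ^ 2 * ‖f x - f y‖ ^ 2)
          ≤ ENNReal.ofReal (ρ x * ρ y * ‖f x - f y‖ ^ 2) := by
        apply ENNReal.ofReal_le_ofReal
        have hxy : crho ^ 2 ≤ ρ x * ρ y := by nlinarith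
        nlinarith [sq_nonneg ‖f x - f y‖]
      calc ENNReal.ofReal (crho ^ 2 * C⁻¹) * ENNReal.ofReal (‖f x - f y‖ ^ 2)
          = ENNReal.ofReal (crho ^ 2 * ‖f x - f y‖ ^ 2) * ENNReal.ofReal C⁻¹ := by
            rw [← ENNReal.ofReal_mul (by positivity), ← ENNReal.ofReal_mul (by positivity)]
            congr 1; ring
        _ ≤ ENNReal.ofReal (ρ x * ρ y * ‖f x - f y‖ ^ 2) * kappaE d lam (x - y) :=
            mul_le_mul' h1 hker
  have hxQae : ∀ᵐ x ∂μ, x ∈ cubeO d := ae_restrict_mem (measurableSet_cubeO d)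
  have haeP : ∀ᵐ x ∂μ, crho ≤ ρ x ∧ x ∈ cubeO d := hρ.and hxQae
  have step1 : ENNReal.ofReal (crho ^ 2 * C⁻¹) * ENNReal.ofReal (2 * B * A)
      ≤ ∫⁻ x in cubeO d, ∫⁻ y in cubeO d,
          ENNReal.ofReal (ρ x * ρ y * ‖f x - f y‖ ^ 2) * kappaE d lam (x - y) := by
    rw [← key2, ← lintegral_const_mul' _ _ ENNReal.ofReal_ne_top]
    refine lintegral_mono_ae ?_
    filter_upwards [haeP] with x hx
    rw [← lintegral_const_mul' _ _ ENNReal.ofReal_ne_top]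
    refine lintegral_mono_ae ?_
    filter_upwards [haeP] with y hy
    exact hpt x y hx hy
  calc (∫⁻ x in cubeO d, (‖f x - fbar‖₊ : ℝ≥0∞) ^ 2)
      = ENNReal.ofReal A := hLHS
    _ = ENNReal.ofReal (C / (2 * B * crho ^ 2)) *
          (ENNReal.ofReal (crho ^ 2 * C⁻¹) * ENNReal.ofReal (2 * B * A)) := by
        rw [← ENNReal.ofReal_mul (by positivity), ← ENNReal.ofReal_mul (by positivity)]
        congr 1
        field_simp
    _ ≤ ENNReal.ofReal (C / (2 * B * crho ^ 2)) *
          ∫⁻ x in cubeO d, ∫⁻ y in cubeO d,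
            ENNReal.ofReal (ρ x * ρ y * ‖f x - f y‖ ^ 2) * kappaE d lam (x - y) :=
        mul_le_mul_right step1 _
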